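/- Let X ∈ ℝ^{m×n} have rank r ≤ d. Then ‖X‖_* = min over factorizations X = U Vᵀ with U ∈ ℝ^{m×d}, V ∈ ℝ^{n×d} of (‖U‖_F²)/2 + (‖V‖_F²)/2, i.e., the nuclear norm equals the minimal value of the half-sum of squared Frobenius norms of the factors, and the minimum is attained. -/

import Mathlib

open Matrix

/-- Singular values of a real matrix (indexed by columns, unordered):
square roots of the eigenvalues of `Aᴴ * A`. -/
noncomputable def svals {a b : ℕ} (A : Matrix (Fin a) (Fin b) ℝ) : Fin b → ℝ :=
  fun i => Real.sqrt ((show (Aᵀ * A).IsHermitian by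
    simpa using Matrix.isHermitian_conjTranspose_mul_self A).eigenvalues i)

/-- Sum of the `q`-th powers of the singular values of `A`
(i.e. `‖A‖_{S_q}^q`, the `q`-th power of the Schatten-`q` (quasi-)norm). -/
noncomputable def schattenPow {a b : ℕ} (q : ℝ) (A : Matrix (Fin a) (Fin b) ℝ) : ℝ :=
  ∑ i, svals A i ^ q

/-- Squared Frobenius norm. -/
def frobSq {a b : ℕ} (A : Matrix (Fin a) (Fin b) ℝ) : ℝ := ∑ i, ∑ j, A i j ^ 2


lemma frobSq_eq_trace {a b : ℕ} (A : Matrix (Fin a) (Fin b) ℝ) :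
    frobSq A = (Aᵀ * A).trace := by
  unfold frobSq Matrix.trace
  simp only [Matrix.diag_apply, Matrix.mul_apply, Matrix.transpose_apply, ← sq]
  exact Finset.sum_comm

lemma frobSq_nonneg {a b : ℕ} (A : Matrix (Fin a) (Fin b) ℝ) : 0 ≤ frobSq A :=
  Finset.sum_nonneg fun _ _ => Finset.sum_nonneg fun _ _ => sq_nonneg _

lemma trace_transpose_mul_le {a b : ℕ} (A B : Matrix (Fin a) (Fin b) ℝ) :
    (Aᵀ * B).trace ≤ frobSq A / 2 + frobSq B / 2 := by
  unfold frobSq Matrix.trace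
  simp only [Matrix.diag_apply, Matrix.mul_apply, Matrix.transpose_apply]
  rw [Finset.sum_comm]
  have h : ∀ i : Fin a, ∑ j, A i j * B i j ≤ (∑ j, A i j ^ 2) / 2 + (∑ j, B i j ^ 2) / 2 := by
    intro i
    rw [Finset.sum_div, Finset.sum_div, ← Finset.sum_add_distrib]
    exact Finset.sum_le_sum fun j _ => by nlinarith [sq_nonneg (A i j - B i j)]
  calc ∑ i, ∑ j, A i j * B i j ≤ ∑ i : Fin a, ((∑ j, A i j ^ 2) / 2 + (∑ j, B i j ^ 2) / 2) :=
        Finset.sum_le_sum fun i _ => h i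
    _ = _ := by rw [Finset.sum_add_distrib, ← Finset.sum_div, ← Finset.sum_div]

lemma sum_ite_ite {α : Type*} [Fintype α] [DecidableEq α] (x y : α) :
    ∑ j, (if x = j then (1:ℝ) else 0) * (if y = j then 1 else 0) = if x = y then 1 else 0 := by
  simp [ite_mul, Finset.sum_ite_eq]

lemma ct_real {a b : ℕ} (A : Matrix (Fin a) (Fin b) ℝ) : Aᴴ = Aᵀ :=
  Matrix.conjTranspose_eq_transpose_of_trivial A

theorem bi_frobenius_surrogate (m n d : ℕ) (X : Matrix (Fin m) (Fin n) ℝ)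
    (hrank : X.rank ≤ d) :
    IsLeast {c : ℝ | ∃ (U : Matrix (Fin m) (Fin d) ℝ) (V : Matrix (Fin n) (Fin d) ℝ),
        X = U * Vᵀ ∧ c = frobSq U / 2 + frobSq V / 2}
      (schattenPow 1 X) := by
  classical
  have hH : (Xᴴ * X).IsHermitian := Matrix.isHermitian_conjTranspose_mul_self X
  set μ : Fin n → ℝ := hH.eigenvalues with hμdef
  have hμ0 : ∀ i, 0 ≤ μ i := fun i => Matrix.eigenvalues_conjTranspose_mul_self_nonneg X i
  set P : Matrix (Fin n) (Fin n) ℝ := (hH.eigenvectorUnitary : Matrix (Fin n) (Fin n) ℝ)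
    with hPdef
  have hPmem := hH.eigenvectorUnitary.2
  have hPtP : Pᵀ * P = 1 := by
    have h := (Matrix.mem_unitaryGroup_iff').mp hPmem
    simp only [Matrix.star_eq_conjTranspose, ct_real] at h
    exact h
  have hPPt : P * Pᵀ = 1 := by
    have h := (Matrix.mem_unitaryGroup_iff).mp hPmem
    simp only [Matrix.star_eq_conjTranspose, ct_real] at h
    exact h
  have hspec : Xᵀ * X = P * Matrix.diagonal μ * Pᵀ := by
    have h := hH.spectral_theorem
    simp only [Matrix.star_eq_conjTranspose, ct_real, RCLike.ofReal_real_eq_id,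
      Function.id_comp] at h
    rw [← ct_real X]
    exact h
  -- collapsing product of two P-sandwiches
  have hPDP : ∀ f g : Fin n → ℝ, (P * Matrix.diagonal f * Pᵀ) * (P * Matrix.diagonal g * Pᵀ)
      = P * Matrix.diagonal (fun i => f i * g i) * Pᵀ := by
    intro f g
    calc (P * Matrix.diagonal f * Pᵀ) * (P * Matrix.diagonal g * Pᵀ)
        = P * Matrix.diagonal f * (Pᵀ * P) * (Matrix.diagonal g * Pᵀ) := by
          simp only [mul_assoc]
      _ = P * (Matrix.diagonal f * Matrix.diagonal g) * Pᵀ := by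
          rw [hPtP, mul_one]; simp only [mul_assoc]
      _ = P * Matrix.diagonal (fun i => f i * g i) * Pᵀ := by
          rw [Matrix.diagonal_mul_diagonal]
  have hsand : ∀ f g : Fin n → ℝ,
      Matrix.diagonal f * Pᵀ * (Xᵀ * X) * (P * Matrix.diagonal g)
        = Matrix.diagonal (fun i => f i * μ i * g i) := by
    intro f g
    rw [hspec]
    calc Matrix.diagonal f * Pᵀ * (P * Matrix.diagonal μ * Pᵀ) * (P * Matrix.diagonal g)
        = Matrix.diagonal f * (Pᵀ * P) * Matrix.diagonal μ * (Pᵀ * P) * Matrix.diagonal g := by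
          simp only [mul_assoc]
      _ = Matrix.diagonal f * Matrix.diagonal μ * Matrix.diagonal g := by
          rw [hPtP]; simp only [mul_one, mul_assoc, one_mul]
      _ = Matrix.diagonal (fun i => f i * μ i * g i) := by
          rw [Matrix.diagonal_mul_diagonal, Matrix.diagonal_mul_diagonal]
  -- nuclear norm as a sum
  have hnuc : schattenPow 1 X = ∑ i, Real.sqrt (μ i) := by
    unfold schattenPow svals
    exact Finset.sum_congr rfl fun i _ => Real.rpow_one _
  -- kernel lemma
  have hker : ∀ f : Fin n → ℝ, (∀ i, f i * μ i = 0) →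
      X * (P * Matrix.diagonal f * Pᵀ) = 0 := by
    intro f hf
    set K : Matrix (Fin n) (Fin n) ℝ := P * Matrix.diagonal f * Pᵀ with hK
    have hKt : Kᵀ = K := by
      rw [hK]
      simp only [Matrix.transpose_mul, Matrix.diagonal_transpose, Matrix.transpose_transpose,
        mul_assoc]
    have hXK : (X * K)ᵀ * (X * K) = 0 := by
      have e1 : (X * K)ᵀ * (X * K) = Kᵀ * (Xᵀ * X) * K := by
        rw [Matrix.transpose_mul]; simp only [Matrix.mul_assoc]
      rw [e1, hKt, hK]
      calc P * Matrix.diagonal f * Pᵀ * (Xᵀ * X) * (P * Matrix.diagonal f * Pᵀ)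
          = P * (Matrix.diagonal f * Pᵀ * (Xᵀ * X) * (P * Matrix.diagonal f)) * Pᵀ := by
            simp only [Matrix.mul_assoc]
        _ = P * Matrix.diagonal (fun i => f i * μ i * f i) * Pᵀ := by rw [hsand]
        _ = 0 := by
            have h0 : (fun i => f i * μ i * f i) = fun _ : Fin n => (0:ℝ) := by
              funext i; rw [hf i, zero_mul]
            rw [h0, Matrix.diagonal_zero, mul_zero, zero_mul]
    have h := Matrix.conjTranspose_mul_self_eq_zero (A := X * K)
    rw [ct_real] at h
    exact h.mp hXK
  have hsand2 : Pᵀ * (Xᵀ * X) * P = Matrix.diagonal μ := by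
    rw [hspec]
    calc Pᵀ * (P * Matrix.diagonal μ * Pᵀ) * P
        = (Pᵀ * P) * Matrix.diagonal μ * (Pᵀ * P) := by simp only [Matrix.mul_assoc]
      _ = Matrix.diagonal μ := by rw [hPtP, one_mul, mul_one]
  set σ : Fin n → ℝ := fun i => Real.sqrt (μ i) with hσdef
  have hσ0 : ∀ i, 0 ≤ σ i := fun i => Real.sqrt_nonneg _
  have hσsq : ∀ i, σ i * σ i = μ i := fun i => Real.mul_self_sqrt (hμ0 i)
  have hσ_zero : ∀ i, μ i = 0 → σ i = 0 := by
    intro i h; rw [hσdef]; simp [h]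
  have hσne : ∀ i, μ i ≠ 0 → σ i ≠ 0 := by
    intro i h hh
    exact h (by rw [← hσsq i, hh, mul_zero])
  set χ : Fin n → ℝ := fun i => if μ i = 0 then 0 else 1 with hχdef
  have hXP : X * (P * Matrix.diagonal χ * Pᵀ) = X := by
    have h1 : X * (P * Matrix.diagonal (fun i => if μ i = 0 then (1:ℝ) else 0) * Pᵀ) = 0 :=
      hker _ (fun i => by by_cases h : μ i = 0 <;> simp [h])
    have h2 : Matrix.diagonal χ =
        1 - Matrix.diagonal (fun i => if μ i = 0 then (1:ℝ) else 0) := by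
      have h3 : Matrix.diagonal χ + Matrix.diagonal (fun i => if μ i = 0 then (1:ℝ) else 0)
          = 1 := by
        rw [Matrix.diagonal_add,
          show (fun i => χ i + if μ i = 0 then (1:ℝ) else 0) = fun _ => 1 from
            funext fun i => by by_cases h : μ i = 0 <;> simp [hχdef, h],
          Matrix.diagonal_one]
      exact eq_sub_of_add_eq h3
    rw [h2, Matrix.mul_sub, mul_one, Matrix.sub_mul, Matrix.mul_sub, hPPt, Matrix.mul_one,
      h1, sub_zero]
  constructor
  · -- membership: the minimum is attained
    have hcard : Fintype.card {i // μ i ≠ 0} ≤ d := by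
      have h1 : (Xᴴ * X).rank = Fintype.card {i // μ i ≠ 0} := hH.rank_eq_card_non_zero_eigs
      rw [ct_real, Matrix.rank_transpose_mul_self] at h1
      calc Fintype.card {i // μ i ≠ 0} = X.rank := h1.symm
        _ ≤ d := hrank
    obtain ⟨g⟩ := Function.Embedding.nonempty_of_card_le
      (α := {i // μ i ≠ 0}) (β := Fin d) (by simpa using hcard)
    set s : Fin n → ℝ := fun i => Real.sqrt (σ i) with hsdef
    have hs2 : ∀ i, s i * s i = σ i := fun i => Real.mul_self_sqrt (hσ0 i)
    have hsne : ∀ i, μ i ≠ 0 → s i ≠ 0 := by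
      intro i h hh
      exact hσne i h (by rw [← hs2 i, hh, mul_zero])
    set τ : Fin n → ℝ := fun i => if μ i = 0 then 0 else 1 / s i with hτdef
    set J : Matrix (Fin d) (Fin n) ℝ :=
      Matrix.of fun j i => if h : μ i ≠ 0 then (if g ⟨i, h⟩ = j then (1:ℝ) else 0) else 0
      with hJdef
    have hJJ : Jᵀ * J = Matrix.diagonal χ := by
      ext i k
      simp only [Matrix.mul_apply, Matrix.transpose_apply, hJdef, Matrix.of_apply]
      by_cases hi : μ i = 0
      · simp [hi, Matrix.diagonal_apply, hχdef]
      · by_cases hk : μ k = 0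
        · have hik : i ≠ k := fun h => hi (h ▸ hk)
          simp [hk, Matrix.diagonal_apply, hik]
        · simp only [dif_pos (show μ i ≠ 0 from hi), dif_pos (show μ k ≠ 0 from hk)]
          rw [sum_ite_ite]
          have hgik : (g ⟨i, hi⟩ = g ⟨k, hk⟩) ↔ i = k := by
            constructor
            · intro h
              exact congrArg Subtype.val (g.injective h)
            · intro h
              subst h
              rfl
          by_cases h : i = k
          · simp [h, Matrix.diagonal_apply, hχdef, hk]
          · have : g ⟨i, hi⟩ ≠ g ⟨k, hk⟩ := fun hh => h (hgik.mp hh)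
            simp [h, this, Matrix.diagonal_apply]
    have hJtr : ∀ f : Fin n → ℝ, (J * Matrix.diagonal f * Jᵀ).trace = ∑ i, χ i * f i := by
      intro f
      rw [Matrix.trace_mul_comm, ← Matrix.mul_assoc, hJJ, Matrix.diagonal_mul_diagonal,
        Matrix.trace_diagonal]
    set V : Matrix (Fin n) (Fin d) ℝ := P * Matrix.diagonal s * Jᵀ with hV
    set U : Matrix (Fin m) (Fin d) ℝ := X * (P * Matrix.diagonal τ * Jᵀ) with hU
    have hfact : X = U * Vᵀ := by
      rw [hU, hV]
      have e : (X * (P * Matrix.diagonal τ * Jᵀ)) * (P * Matrix.diagonal s * Jᵀ)ᵀ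
          = X * (P * (Matrix.diagonal τ * (Jᵀ * J) * Matrix.diagonal s) * Pᵀ) := by
        simp only [Matrix.transpose_mul, Matrix.diagonal_transpose,
          Matrix.transpose_transpose, Matrix.mul_assoc]
      rw [e, hJJ]
      have e2 : Matrix.diagonal τ * Matrix.diagonal χ * Matrix.diagonal s
          = Matrix.diagonal χ := by
        rw [Matrix.diagonal_mul_diagonal, Matrix.diagonal_mul_diagonal]
        refine congrArg _ (funext fun i => ?_)
        by_cases h : μ i = 0
        · simp [hτdef, hχdef, h]
        · simp only [hτdef, hχdef, if_neg h, mul_one, one_div]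
          rw [inv_mul_cancel₀ (hsne i h)]
      rw [e2]
      exact hXP.symm
    have hfV : frobSq V = ∑ i, σ i := by
      rw [frobSq_eq_trace]
      have e : Vᵀ * V = J * Matrix.diagonal σ * Jᵀ := by
        rw [hV]
        calc (P * Matrix.diagonal s * Jᵀ)ᵀ * (P * Matrix.diagonal s * Jᵀ)
            = J * (Matrix.diagonal s * ((Pᵀ * P) * (Matrix.diagonal s * Jᵀ))) := by
              simp only [Matrix.transpose_mul, Matrix.diagonal_transpose,
                Matrix.transpose_transpose, Matrix.mul_assoc]
          _ = J * (Matrix.diagonal s * (Matrix.diagonal s * Jᵀ)) := by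
              rw [hPtP, Matrix.one_mul]
          _ = J * Matrix.diagonal σ * Jᵀ := by
              rw [← Matrix.mul_assoc (Matrix.diagonal s) (Matrix.diagonal s),
                Matrix.diagonal_mul_diagonal, ← Matrix.mul_assoc,
                show (fun i => s i * s i) = σ from funext hs2]
      rw [e, hJtr]
      refine Finset.sum_congr rfl fun i _ => ?_
      by_cases h : μ i = 0
      · simp [hχdef, h, hσ_zero i h]
      · simp [hχdef, h]
    have hfU : frobSq U = ∑ i, σ i := by
      rw [frobSq_eq_trace]
      have e : Uᵀ * U = J * Matrix.diagonal (fun i => τ i * μ i * τ i) * Jᵀ := by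
        rw [hU]
        calc (X * (P * Matrix.diagonal τ * Jᵀ))ᵀ * (X * (P * Matrix.diagonal τ * Jᵀ))
            = J * (Matrix.diagonal τ * Pᵀ * (Xᵀ * X) * (P * Matrix.diagonal τ)) * Jᵀ := by
              simp only [Matrix.transpose_mul, Matrix.diagonal_transpose,
                Matrix.transpose_transpose, Matrix.mul_assoc]
          _ = J * Matrix.diagonal (fun i => τ i * μ i * τ i) * Jᵀ := by rw [hsand]
      rw [e, hJtr]
      refine Finset.sum_congr rfl fun i _ => ?_
      by_cases h : μ i = 0
      · simp [hχdef, hτdef, h, hσ_zero i h]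
      · have hσi : σ i ≠ 0 := hσne i h
        have hsi : s i ≠ 0 := hsne i h
        simp only [hχdef, hτdef, if_neg h, one_mul]
        calc 1 / s i * μ i * (1 / s i) = μ i / (s i * s i) := by ring
          _ = μ i / σ i := by rw [hs2 i]
          _ = σ i := by rw [← hσsq i, mul_div_assoc, div_self hσi, mul_one]
    exact ⟨U, V, hfact, by rw [hfU, hfV, hnuc]; ring⟩
  · -- lower bound
    rintro c ⟨U, V, hXUV, rfl⟩
    set τ₀ : Fin n → ℝ := fun i => if μ i = 0 then 0 else 1 / σ i with hτ0
    set Q : Matrix (Fin m) (Fin n) ℝ := X * (P * Matrix.diagonal τ₀) with hQ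
    have hQtXP : Qᵀ * (X * P) = Matrix.diagonal (fun i => τ₀ i * μ i) := by
      calc Qᵀ * (X * P)
          = Matrix.diagonal τ₀ * (Pᵀ * (Xᵀ * X) * P) := by
            rw [hQ]
            simp only [Matrix.transpose_mul, Matrix.diagonal_transpose, Matrix.mul_assoc]
        _ = Matrix.diagonal τ₀ * Matrix.diagonal μ := by rw [hsand2]
        _ = Matrix.diagonal (fun i => τ₀ i * μ i) := Matrix.diagonal_mul_diagonal _ _
    have hτμ : ∀ i, τ₀ i * μ i = σ i := by
      intro i
      by_cases h : μ i = 0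
      · simp [hτ0, h, hσ_zero i h]
      · rw [hτ0]
        simp only [if_neg h]
        rw [← hσsq i]
        field_simp
    have htrace : ((Uᵀ * Q)ᵀ * (Vᵀ * P)).trace = ∑ i, σ i := by
      have e : (Uᵀ * Q)ᵀ * (Vᵀ * P) = Qᵀ * (X * P) := by
        rw [Matrix.transpose_mul, Matrix.transpose_transpose, hXUV]
        simp only [Matrix.mul_assoc]
      rw [e, hQtXP, Matrix.trace_diagonal]
      exact Finset.sum_congr rfl fun i _ => hτμ i
    have hQtQ : Qᵀ * Q = Matrix.diagonal χ := by
      calc Qᵀ * Q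
          = Matrix.diagonal τ₀ * Pᵀ * (Xᵀ * X) * (P * Matrix.diagonal τ₀) := by
            rw [hQ]
            simp only [Matrix.transpose_mul, Matrix.diagonal_transpose, Matrix.mul_assoc]
        _ = Matrix.diagonal (fun i => τ₀ i * μ i * τ₀ i) := hsand _ _
        _ = Matrix.diagonal χ := by
            refine congrArg _ (funext fun i => ?_)
            by_cases h : μ i = 0
            · simp [hτ0, hχdef, h]
            · rw [hτμ i]
              simp only [hτ0, hχdef, if_neg h]
              rw [mul_one_div, div_self (hσne i h)]
    have hQχ : Q * Matrix.diagonal χ = Q := by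
      rw [hQ]
      simp only [Matrix.mul_assoc, Matrix.diagonal_mul_diagonal]
      have e : (fun i => τ₀ i * χ i) = τ₀ := by
        funext i
        by_cases h : μ i = 0 <;> simp [hτ0, hχdef, h]
      rw [e]
    have hfVP : frobSq (Vᵀ * P) = frobSq V := by
      rw [frobSq_eq_trace, frobSq_eq_trace]
      rw [Matrix.transpose_mul, Matrix.transpose_transpose, Matrix.trace_mul_comm]
      congr 1
      calc Vᵀ * P * (Pᵀ * V) = Vᵀ * ((P * Pᵀ) * V) := by simp only [Matrix.mul_assoc]
        _ = Vᵀ * V := by rw [hPPt, Matrix.one_mul]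
    have hfUQ : frobSq (Uᵀ * Q) ≤ frobSq U := by
      set A : Matrix (Fin n) (Fin d) ℝ := Qᵀ * U with hAdef
      have e1 : (U - Q * A)ᵀ * (U - Q * A)
          = Uᵀ * U - (Uᵀ * (Q * A) + (Uᵀ * (Q * A))ᵀ) + Aᵀ * (Qᵀ * Q) * A := by
        simp only [Matrix.sub_mul, Matrix.mul_sub, Matrix.transpose_sub, Matrix.transpose_mul,
          Matrix.transpose_transpose, Matrix.mul_assoc]
        abel
      have e2 : Aᵀ * (Qᵀ * Q) * A = Uᵀ * (Q * A) := by
        rw [hQtQ, hAdef]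
        calc (Qᵀ * U)ᵀ * Matrix.diagonal χ * (Qᵀ * U)
            = Uᵀ * ((Q * Matrix.diagonal χ) * (Qᵀ * U)) := by
              simp only [Matrix.transpose_mul, Matrix.transpose_transpose, Matrix.mul_assoc]
          _ = Uᵀ * (Q * (Qᵀ * U)) := by rw [hQχ]
      have e3 : ((Uᵀ * Q)ᵀ * (Uᵀ * Q)).trace = (Uᵀ * (Q * A)).trace := by
        rw [Matrix.trace_mul_comm]
        congr 1
        rw [hAdef]
        simp only [Matrix.transpose_mul, Matrix.transpose_transpose, Matrix.mul_assoc]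
      have key : frobSq U - frobSq (Uᵀ * Q) = frobSq (U - Q * A) := by
        rw [frobSq_eq_trace, frobSq_eq_trace, frobSq_eq_trace, e3, e1, e2]
        rw [Matrix.trace_add, Matrix.trace_sub, Matrix.trace_add, Matrix.trace_transpose]
        ring
      have hnn := frobSq_nonneg (U - Q * A)
      linarith
    calc schattenPow 1 X = ((Uᵀ * Q)ᵀ * (Vᵀ * P)).trace := by rw [hnuc, ← htrace]
      _ ≤ frobSq (Uᵀ * Q) / 2 + frobSq (Vᵀ * P) / 2 := trace_transpose_mul_le _ _
      _ ≤ frobSq U / 2 + frobSq V / 2 := by rw [hfVP]; linarith
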